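/- Let W : ℝ^d → ℂ be continuous and cell-periodic with unit cube cell [0,1]^d, and let k, m ∈ ℝ^d with (k − m)/(2π) ∉ ℤ^d. Then the large-cell average of e^{i(k−m)·ξ} W(ξ) vanishes: lim_{l→∞} (1/l^d) ∫_{[0,l]^d} e^{i(k−m)·ξ} W(ξ) dξ = 0. -/

import Mathlib

open MeasureTheory Filter

def HHbox (d : ℕ) (j : Fin d) (l : ℕ) (a b : ℝ) : Set (Fin d → ℝ) :=
  Set.univ.pi (fun i => if i = j then Set.Ioc a b else Set.Ioc (0:ℝ) (l:ℝ))

lemma HHbox_union (d : ℕ) (j : Fin d) (l : ℕ) (a b c : ℝ) (hab : a ≤ b) (hbc : b ≤ c) :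
    HHbox d j l a c = HHbox d j l a b ∪ HHbox d j l b c := by
  ext x
  simp only [HHbox, Set.mem_union, Set.mem_pi, Set.mem_univ, forall_true_left]
  constructor
  · intro h
    rcases le_or_gt (x j) b with hx | hx
    · left; intro i
      have hi := h i
      by_cases hij : i = j
      · subst hij; simp only [if_pos rfl, Set.mem_Ioc] at hi ⊢; exact ⟨hi.1, hx⟩
      · simpa [hij] using hi
    · right; intro i
      have hi := h i
      by_cases hij : i = j
      · subst hij; simp only [if_pos rfl, Set.mem_Ioc] at hi ⊢; exact ⟨hx, hi.2⟩
      · simpa [hij] using hi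
  · rintro (h | h) <;> intro i <;> have hi := h i <;> by_cases hij : i = j
    · subst hij; simp only [if_pos rfl, Set.mem_Ioc] at hi ⊢
      exact ⟨hi.1, le_trans hi.2 hbc⟩
    · simpa [hij] using hi
    · subst hij; simp only [if_pos rfl, Set.mem_Ioc] at hi ⊢
      exact ⟨lt_of_le_of_lt (by linarith) hi.1, hi.2⟩
    · simpa [hij] using hi

lemma HHbox_disjoint (d : ℕ) (j : Fin d) (l : ℕ) (a b c : ℝ) :
    Disjoint (HHbox d j l a b) (HHbox d j l b c) := by
  rw [Set.disjoint_left]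
  intro x hx hx'
  have h1 := hx j (Set.mem_univ j)
  have h2 := hx' j (Set.mem_univ j)
  simp only [if_pos rfl, Set.mem_Ioc] at h1 h2
  linarith [h1.2, h2.1]

lemma HHbox_measurable (d : ℕ) (j : Fin d) (l : ℕ) (a b : ℝ) :
    MeasurableSet (HHbox d j l a b) :=
  MeasurableSet.univ_pi (fun _ => by split <;> exact measurableSet_Ioc)

lemma HHbox_subset_Icc (d : ℕ) (j : Fin d) (l : ℕ) (a b : ℝ) :
    HHbox d j l a b ⊆ Set.Icc (fun i => if i = j then a else 0)
      (fun i => if i = j then b else (l:ℝ)) := by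
  rw [← Set.pi_univ_Icc]
  refine Set.pi_mono fun i _ => ?_
  split <;> exact Set.Ioc_subset_Icc_self

lemma HHbox_integrableOn (d : ℕ) (j : Fin d) (l : ℕ) (f : (Fin d → ℝ) → ℂ)
    (hfc : Continuous f) (a b : ℝ) : IntegrableOn f (HHbox d j l a b) :=
  (hfc.integrableOn_Icc).mono_set (HHbox_subset_Icc d j l a b)

lemma HHbox_volume_lt_top (d : ℕ) (j : Fin d) (l : ℕ) (a b : ℝ) :
    volume (HHbox d j l a b) < ⊤ :=
  lt_of_le_of_lt (measure_mono (HHbox_subset_Icc d j l a b)) isCompact_Icc.measure_lt_top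

lemma HHbox_volume (d : ℕ) (j : Fin d) (l : ℕ) (a b : ℝ) (hab : a ≤ b) :
    (volume (HHbox d j l a b)).toReal = (b - a) * (l:ℝ)^(d-1) := by
  rw [HHbox, volume_pi_pi]
  have h : ∀ i : Fin d, volume (if i = j then Set.Ioc a b else Set.Ioc (0:ℝ) (l:ℝ))
      = if i = j then ENNReal.ofReal (b - a) else ENNReal.ofReal l := by
    intro i
    split
    · rw [Real.volume_Ioc]
    · rw [Real.volume_Ioc, sub_zero]
  simp_rw [h]
  rw [← Finset.mul_prod_erase Finset.univ _ (Finset.mem_univ j), if_pos rfl]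
  rw [Finset.prod_congr rfl (fun i hi => if_neg (Finset.ne_of_mem_erase hi)),
    Finset.prod_const, Finset.card_erase_of_mem (Finset.mem_univ j), Finset.card_univ,
    Fintype.card_fin]
  rw [ENNReal.toReal_mul, ENNReal.toReal_pow, ENNReal.toReal_ofReal (by linarith),
    ENNReal.toReal_ofReal (Nat.cast_nonneg l)]

lemma HH_norm_integral_le (d : ℕ) (j : Fin d) (l : ℕ) (f : (Fin d → ℝ) → ℂ)
    (hfc : Continuous f) (M : ℝ) (hM : ∀ x, ‖f x‖ ≤ M) (a b : ℝ) (hab : a ≤ b) :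
    ‖∫ x in HHbox d j l a b, f x‖ ≤ M * ((b - a) * (l:ℝ)^(d-1)) := by
  have := norm_setIntegral_le_of_norm_le_const (μ := volume) (s := HHbox d j l a b)
    (HHbox_volume_lt_top d j l a b) (fun x _ => hM x)
  rwa [measureReal_def, HHbox_volume d j l a b hab] at this

lemma W_int_shift {d : ℕ} (W : (Fin d → ℝ) → ℂ)
    (hper : ∀ (x : Fin d → ℝ) (i : Fin d), W (x + Pi.single i 1) = W x)
    (g : Fin d → ℤ) (x : Fin d → ℝ) : W (x + fun i => (g i : ℝ)) = W x := by
  have one : ∀ (x : Fin d → ℝ) (i : Fin d) (n : ℤ), W (x + Pi.single i (n : ℝ)) = W x := by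
    intro x i n
    induction n using Int.induction_on with
    | zero => simp
    | succ n ih =>
        push_cast at ih ⊢
        rw [Pi.single_add, ← add_assoc, hper, ih]
    | pred n ih =>
        push_cast at ih ⊢
        have h := hper (x + Pi.single i (-(n : ℝ) - 1)) i
        rw [add_assoc, ← Pi.single_add] at h
        norm_num at h
        rw [← h, ih]
  have key : ∀ (s : Finset (Fin d)) (x : Fin d → ℝ),
      W (x + ∑ i ∈ s, Pi.single i ((g i : ℝ))) = W x := by
    intro s
    induction s using Finset.induction_on with
    | empty => simp
    | insert _ _ ha ih =>
        intro x
        rename_i a s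
        rw [Finset.sum_insert ha, ← add_assoc, ih]
        exact one x a (g a)
  have h : (fun i => (g i : ℝ)) = ∑ i, Pi.single i ((g i : ℝ)) := by
    rw [Finset.univ_sum_single]
  rw [h, key]

lemma W_bounded {d : ℕ} (W : (Fin d → ℝ) → ℂ) (hW : Continuous W)
    (hper : ∀ (x : Fin d → ℝ) (i : Fin d), W (x + Pi.single i 1) = W x) :
    ∃ M : ℝ, 0 ≤ M ∧ ∀ x, ‖W x‖ ≤ M := by
  obtain ⟨C, hC⟩ := (isCompact_Icc (a := (0 : Fin d → ℝ)) (b := 1)).exists_bound_of_continuousOn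
    hW.continuousOn
  refine ⟨max C 0, le_max_right _ _, fun x => ?_⟩
  have hx : W x = W (fun i => Int.fract (x i)) := by
    have h2 : x = (fun i => Int.fract (x i)) + fun i => ((⌊x i⌋ : ℤ) : ℝ) := by
      funext i
      show x i = Int.fract (x i) + (⌊x i⌋ : ℝ)
      rw [Int.fract]; ring
    conv_lhs => rw [h2]
    rw [W_int_shift W hper]
  rw [hx]
  refine le_trans (hC _ ?_) (le_max_left _ _)
  rw [Set.mem_Icc]
  constructor <;> intro i
  · exact Int.fract_nonneg _
  · exact (Int.fract_lt_one _).le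

theorem coupling_coefficient_vanishes
    (d : ℕ) (hd : 0 < d) (W : (Fin d → ℝ) → ℂ) (hW : Continuous W)
    (hper : ∀ (x : Fin d → ℝ) (i : Fin d), W (x + Pi.single i 1) = W x)
    (k m : Fin d → ℝ)
    (hkm : ∃ j, ¬ ∃ n : ℤ, k j - m j = 2 * Real.pi * n) :
    Filter.Tendsto
      (fun l : ℕ => ((l : ℝ) ^ d)⁻¹ •
        ∫ x in Set.univ.pi (fun _ : Fin d => Set.Icc (0:ℝ) (l : ℝ)),
          Complex.exp (Complex.I * ((∑ i, (k i - m i) * x i : ℝ) : ℂ)) * W x)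
      Filter.atTop (nhds 0) := by
  obtain ⟨j, hj⟩ := hkm
  set f : (Fin d → ℝ) → ℂ :=
    fun x => Complex.exp (Complex.I * ((∑ i, (k i - m i) * x i : ℝ) : ℂ)) * W x with hf
  have hfc : Continuous f := by
    apply Continuous.mul _ hW
    exact Complex.continuous_exp.comp (continuous_const.mul
      (Complex.continuous_ofReal.comp (by continuity)))
  set c : ℂ := Complex.exp (Complex.I * ((k j - m j : ℝ) : ℂ)) with hcdef
  have hc : c ≠ 1 := by
    intro h
    rw [hcdef, Complex.exp_eq_one_iff] at h
    obtain ⟨n, hn⟩ := h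
    refine hj ⟨n, ?_⟩
    have h2 : (Complex.I) * ((k j - m j : ℝ) : ℂ)
        = Complex.I * ((2 * Real.pi * n : ℝ) : ℂ) := by
      rw [hn]; push_cast; ring
    have h3 := mul_left_cancel₀ Complex.I_ne_zero h2
    exact_mod_cast h3
  have hc1 : (0:ℝ) < ‖c - 1‖ := by
    rw [norm_pos_iff]
    exact sub_ne_zero.mpr hc
  have hkey : ∀ x : Fin d → ℝ, f (x + Pi.single j 1) = c * f x := by
    intro x
    have hsum : (∑ i, (k i - m i) * ((x + Pi.single j 1 : Fin d → ℝ)) i)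
        = (∑ i, (k i - m i) * x i) + (k j - m j) := by
      simp only [Pi.add_apply, mul_add, Finset.sum_add_distrib]
      congr 1
      simp [Pi.single_apply, mul_ite, Finset.sum_ite_eq']
    rw [hf]
    simp only
    rw [hper x j, hsum, Complex.ofReal_add, mul_add, Complex.exp_add]
    ring
  obtain ⟨M, hM0, hM⟩ := W_bounded W hW hper
  have hfM : ∀ x, ‖f x‖ ≤ M := by
    intro x
    rw [hf]
    simp only
    rw [norm_mul, mul_comm Complex.I, Complex.norm_exp_ofReal_mul_I, one_mul]
    exact hM x
  -- main estimate
  have key : ∀ l : ℕ, ‖∫ x in HHbox d j l 0 (l:ℝ), f x‖ * ‖c - 1‖ ≤ 2 * M * (l:ℝ)^(d-1) := by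
    intro l
    have htrans : ∫ x in HHbox d j l 1 ((l:ℝ)+1), f x
        = c * ∫ x in HHbox d j l 0 (l:ℝ), f x := by
      have hmp : MeasurePreserving (fun x : Fin d → ℝ => x + Pi.single j 1) volume volume :=
        measurePreserving_add_right volume (Pi.single j 1)
      have hemb : MeasurableEmbedding (fun x : Fin d → ℝ => x + Pi.single j 1) :=
        (MeasurableEquiv.addRight (Pi.single j 1)).measurableEmbedding
      have hpre : (fun x : Fin d → ℝ => x + Pi.single j 1) ⁻¹' HHbox d j l 1 ((l:ℝ)+1)
          = HHbox d j l 0 (l:ℝ) := by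
        ext x
        simp only [HHbox, Set.mem_preimage, Set.mem_pi, Set.mem_univ, forall_true_left,
          Pi.add_apply]
        refine forall_congr' fun i => ?_
        by_cases h : i = j
        · subst h
          simp [Set.mem_Ioc]
        · simp [h, Pi.single_apply]
      rw [← hmp.setIntegral_preimage_emb hemb f _, hpre]
      simp_rw [hkey]
      rw [integral_const_mul]
    have hsplit1 : ∫ x in HHbox d j l 0 ((l:ℝ)+1), f x
        = (∫ x in HHbox d j l 0 1, f x) + ∫ x in HHbox d j l 1 ((l:ℝ)+1), f x := by
      rw [HHbox_union d j l 0 1 ((l:ℝ)+1) zero_le_one (by have := Nat.cast_nonneg (α := ℝ) l; linarith)]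
      exact setIntegral_union (HHbox_disjoint d j l 0 1 ((l:ℝ)+1))
        (HHbox_measurable d j l 1 ((l:ℝ)+1)) (HHbox_integrableOn d j l f hfc 0 1)
        (HHbox_integrableOn d j l f hfc 1 ((l:ℝ)+1))
    have hsplit2 : ∫ x in HHbox d j l 0 ((l:ℝ)+1), f x
        = (∫ x in HHbox d j l 0 (l:ℝ), f x) + ∫ x in HHbox d j l (l:ℝ) ((l:ℝ)+1), f x := by
      rw [HHbox_union d j l 0 (l:ℝ) ((l:ℝ)+1) (Nat.cast_nonneg l) (by linarith)]
      exact setIntegral_union (HHbox_disjoint d j l 0 (l:ℝ) ((l:ℝ)+1))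
        (HHbox_measurable d j l (l:ℝ) ((l:ℝ)+1)) (HHbox_integrableOn d j l f hfc 0 (l:ℝ))
        (HHbox_integrableOn d j l f hfc (l:ℝ) ((l:ℝ)+1))
    have hdiff : (c - 1) * ∫ x in HHbox d j l 0 (l:ℝ), f x
        = (∫ x in HHbox d j l (l:ℝ) ((l:ℝ)+1), f x) - ∫ x in HHbox d j l 0 1, f x := by
      have e1 : c * ∫ x in HHbox d j l 0 (l:ℝ), f x
          = (∫ x in HHbox d j l 0 ((l:ℝ)+1), f x) - ∫ x in HHbox d j l 0 1, f x := by
        rw [← htrans, hsplit1]; ring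
      have e2 : (∫ x in HHbox d j l 0 (l:ℝ), f x)
          = (∫ x in HHbox d j l 0 ((l:ℝ)+1), f x) - ∫ x in HHbox d j l (l:ℝ) ((l:ℝ)+1), f x := by
        rw [hsplit2]; ring
      rw [sub_mul, e1, one_mul, e2]
      ring
    calc ‖∫ x in HHbox d j l 0 (l:ℝ), f x‖ * ‖c - 1‖
        = ‖(c - 1) * ∫ x in HHbox d j l 0 (l:ℝ), f x‖ := by rw [norm_mul, mul_comm]
      _ = ‖(∫ x in HHbox d j l (l:ℝ) ((l:ℝ)+1), f x) - ∫ x in HHbox d j l 0 1, f x‖ := by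
          rw [hdiff]
      _ ≤ ‖∫ x in HHbox d j l (l:ℝ) ((l:ℝ)+1), f x‖ + ‖∫ x in HHbox d j l 0 1, f x‖ :=
          norm_sub_le _ _
      _ ≤ M * (((l:ℝ)+1 - l) * (l:ℝ)^(d-1)) + M * ((1 - 0) * (l:ℝ)^(d-1)) :=
          add_le_add (HH_norm_integral_le d j l f hfc M hfM (l:ℝ) ((l:ℝ)+1) (by linarith))
            (HH_norm_integral_le d j l f hfc M hfM 0 1 zero_le_one)
      _ = 2 * M * (l:ℝ)^(d-1) := by ring
  -- conclude
  apply squeeze_zero_norm' (a := fun l : ℕ => (2 * M / ‖c - 1‖) * (l:ℝ)⁻¹)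
  · filter_upwards [eventually_ge_atTop 1] with l hl
    have hl0 : (0:ℝ) < l := by exact_mod_cast hl
    have hIcc : (∫ x in Set.univ.pi (fun _ : Fin d => Set.Icc (0:ℝ) (l:ℝ)), f x)
        = ∫ x in HHbox d j l 0 (l:ℝ), f x := by
      have h1 : HHbox d j l 0 (l:ℝ) = Set.univ.pi (fun _ : Fin d => Set.Ioc (0:ℝ) (l:ℝ)) := by
        simp [HHbox]
      rw [h1]
      have h2 : Set.univ.pi (fun _ : Fin d => Set.Icc (0:ℝ) (l:ℝ))
          = Set.Icc (0 : Fin d → ℝ) (fun _ => (l:ℝ)) := by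
        rw [← Set.pi_univ_Icc]; rfl
      rw [h2]
      exact (setIntegral_congr_set MeasureTheory.Measure.univ_pi_Ioc_ae_eq_Icc).symm
    show ‖((l : ℝ) ^ d)⁻¹ • ∫ x in Set.univ.pi (fun _ : Fin d => Set.Icc (0:ℝ) (l:ℝ)), f x‖
        ≤ (2 * M / ‖c - 1‖) * (l:ℝ)⁻¹
    rw [hIcc, norm_smul, norm_inv, norm_pow, Real.norm_natCast]
    have hbound : ‖∫ x in HHbox d j l 0 (l:ℝ), f x‖ ≤ 2 * M * (l:ℝ)^(d-1) / ‖c - 1‖ := by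
      rw [le_div_iff₀ hc1]
      exact key l
    have hpow : ((l:ℝ) ^ d)⁻¹ = ((l:ℝ)^(d-1))⁻¹ * (l:ℝ)⁻¹ := by
      rw [← mul_inv, ← pow_succ, Nat.sub_add_cancel hd]
    calc ((l:ℝ) ^ d)⁻¹ * ‖∫ x in HHbox d j l 0 (l:ℝ), f x‖
        ≤ ((l:ℝ) ^ d)⁻¹ * (2 * M * (l:ℝ)^(d-1) / ‖c - 1‖) :=
          mul_le_mul_of_nonneg_left hbound (by positivity)
      _ = (2 * M / ‖c - 1‖) * (l:ℝ)⁻¹ := by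
          have hgen : ∀ a b C : ℝ, a ≠ 0 → b ≠ 0 → C ≠ 0 →
              (a⁻¹ * b⁻¹) * (2 * M * a / C) = (2 * M / C) * b⁻¹ := by
            intros a b C ha hb hC
            field_simp
          rw [hpow]
          exact hgen _ _ _ (by positivity) (by positivity) (ne_of_gt hc1)
  · simpa using (tendsto_inv_atTop_nhds_zero_nat).const_mul (2 * M / ‖c - 1‖)
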